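/- Let a₁, …, a_N ∈ ℝ and I = {Σ_{i=1}^N θᵢaᵢ : 0 ≤ θᵢ ≤ 1 for 1 ≤ i ≤ N}. Suppose f ∈ C²(ℝ) and f(0) = 0. Then |f(Σ_{i=1}^N aᵢ) − Σ_{i=1}^N f(aᵢ)| ≤ (sup_{x∈I} |f''(x)|) · Σ_{i≠j} |aᵢ aⱼ|. -/

import Mathlib

open scoped BigOperators

lemma key_ineq (f : ℝ → ℝ) (hf : ContDiff ℝ 2 f) (x y : ℝ) :
    ∃ s ∈ Set.Icc (0:ℝ) 1, ∃ c ∈ Set.Icc (0:ℝ) 1,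
      f (x + y) - f x - f y + f 0 = x * y * iteratedDeriv 2 f (s * x + c * y) := by
  have hd1 : Differentiable ℝ f := hf.differentiable two_ne_zero
  have hd2 : Differentiable ℝ (deriv f) := by
    have h2 : ContDiff ℝ ((1:ℕ)+1) f := by exact_mod_cast hf
    exact (contDiff_succ_iff_deriv.mp h2).2.2.differentiable (by norm_num)
  have hit : iteratedDeriv 2 f = deriv (deriv f) := by
    rw [iteratedDeriv_succ, iteratedDeriv_one]
  rcases eq_or_ne x 0 with hx | hx
  · exact ⟨0, ⟨le_refl 0, zero_le_one⟩, 0, ⟨le_refl 0, zero_le_one⟩, by rw [hx, zero_add]; ring⟩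
  · have hcf : Continuous f := hd1.continuous
    have hh : ∀ t : ℝ, HasDerivAt (fun t => f (x + t * y) - f (t * y))
        (deriv f (x + t * y) * y - deriv f (t * y) * y) t := by
      intro t
      have h1 : HasDerivAt (fun t : ℝ => x + t * y) y t := by
        simpa using ((hasDerivAt_id t).mul_const y).const_add x
      have h2 : HasDerivAt (fun t : ℝ => t * y) y t := by
        simpa using (hasDerivAt_id t).mul_const y
      exact ((hd1 _).hasDerivAt.comp t h1).sub ((hd1 _).hasDerivAt.comp t h2)
    obtain ⟨c, hc, hceq⟩ := exists_hasDerivAt_eq_slope (fun t => f (x + t * y) - f (t * y))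
      (fun t => deriv f (x + t * y) * y - deriv f (t * y) * y) zero_lt_one
      (by fun_prop) (fun z _ => hh z)
    -- hceq : deriv f (x + c*y) * y - deriv f (c*y) * y = (h 1 - h 0)/(1-0)
    have hstep : f (x + y) - f x - f y + f 0 = (deriv f (x + c * y) - deriv f (c * y)) * y := by
      have := hceq
      simp only [one_mul, zero_mul, add_zero, sub_zero, div_one] at this
      linarith [this]
    rcases lt_or_gt_of_ne hx with hxneg | hxpos
    · obtain ⟨d, hd, hdeq⟩ := exists_hasDerivAt_eq_slope (deriv f) (deriv (deriv f))
        (show c * y + x < c * y by linarith) hd2.continuous.continuousOn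
        (fun z _ => (hd2 z).hasDerivAt)
      refine ⟨(d - c * y) / x, ⟨?_, ?_⟩, c, ⟨hc.1.le, hc.2.le⟩, ?_⟩
      · apply le_of_lt
        apply div_pos_of_neg_of_neg _ hxneg
        linarith [hd.2]
      · apply le_of_lt
        rw [div_lt_iff_of_neg hxneg]
        linarith [hd.1]
      · have hdd : (d - c * y) / x * x + c * y = d := by field_simp; ring
        rw [hdd, hit]
        have : deriv (deriv f) d * (c * y - (c * y + x)) = deriv f (c * y) - deriv f (c * y + x) := by
          rw [hdeq]; exact div_mul_cancel₀ _ (by intro h; apply hx; linarith)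
        have h3 : deriv f (x + c * y) - deriv f (c * y) = x * deriv (deriv f) d := by
          rw [show x + c * y = c * y + x by ring]; nlinarith [this]
        rw [hstep, h3]; ring
    · obtain ⟨d, hd, hdeq⟩ := exists_hasDerivAt_eq_slope (deriv f) (deriv (deriv f))
        (show c * y < c * y + x by linarith) hd2.continuous.continuousOn
        (fun z _ => (hd2 z).hasDerivAt)
      refine ⟨(d - c * y) / x, ⟨?_, ?_⟩, c, ⟨hc.1.le, hc.2.le⟩, ?_⟩
      · apply le_of_lt
        apply div_pos _ hxpos
        linarith [hd.1]
      · apply le_of_lt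
        rw [div_lt_one hxpos]
        linarith [hd.2]
      · have hdd : (d - c * y) / x * x + c * y = d := by field_simp; ring
        rw [hdd, hit]
        have : deriv (deriv f) d * (c * y + x - c * y) = deriv f (c * y + x) - deriv f (c * y) := by
          rw [hdeq]; exact div_mul_cancel₀ _ (by intro h; apply hx; linarith)
        have h3 : deriv f (x + c * y) - deriv f (c * y) = x * deriv (deriv f) d := by
          rw [show x + c * y = c * y + x by ring]; nlinarith [this]
        rw [hstep, h3]; ring

lemma aux_ind (f : ℝ → ℝ) (hf : ContDiff ℝ 2 f) (hf0 : f 0 = 0) (b : ℕ → ℝ) (M : ℝ)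
    (hM0 : 0 ≤ M) (N : ℕ)
    (hM : ∀ n < N, ∀ s ∈ Set.Icc (0:ℝ) 1, ∀ c ∈ Set.Icc (0:ℝ) 1,
      |iteratedDeriv 2 f (s * (∑ i ∈ Finset.range n, b i) + c * b n)| ≤ M) :
    ∀ n, n ≤ N → |f (∑ i ∈ Finset.range n, b i) - ∑ i ∈ Finset.range n, f (b i)|
      ≤ M * ∑ i ∈ Finset.range n, ∑ j ∈ Finset.range n,
          (if i = j then 0 else |b i * b j|) := by
  intro n
  induction n with
  | zero => intro _; simp [hf0]
  | succ n ih =>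
    intro hn
    have ihn := ih (Nat.le_of_succ_le hn)
    obtain ⟨s, hs, c, hc, heq⟩ := key_ineq f hf (∑ i ∈ Finset.range n, b i) (b n)
    have hb := hM n (Nat.lt_of_succ_le hn) s hs c hc
    set S := ∑ i ∈ Finset.range n, b i with hS
    set P := iteratedDeriv 2 f (s * S + c * b n) with hP
    -- bound on the cross term
    have hcross : |S| * |b n| ≤ ∑ i ∈ Finset.range n, |b i * b n| := by
      calc |S| * |b n| ≤ (∑ i ∈ Finset.range n, |b i|) * |b n| :=
            mul_le_mul_of_nonneg_right (Finset.abs_sum_le_sum_abs _ _) (abs_nonneg _)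
        _ = ∑ i ∈ Finset.range n, |b i * b n| := by
            rw [Finset.sum_mul]; exact Finset.sum_congr rfl fun i _ => (abs_mul _ _).symm
    -- double sum growth
    have hD : ∑ i ∈ Finset.range n, ∑ j ∈ Finset.range n, (if i = j then 0 else |b i * b j|)
          + ∑ i ∈ Finset.range n, |b i * b n|
        ≤ ∑ i ∈ Finset.range (n+1), ∑ j ∈ Finset.range (n+1),
            (if i = j then 0 else |b i * b j|) := by
      rw [Finset.sum_range_succ]
      have hin : ∀ i : ℕ, ∑ j ∈ Finset.range (n+1), (if i = j then 0 else |b i * b j|)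
          = ∑ j ∈ Finset.range n, (if i = j then 0 else |b i * b j|)
            + (if i = n then 0 else |b i * b n|) := fun i => Finset.sum_range_succ _ n
      have h1 : ∑ i ∈ Finset.range n, (if i = n then 0 else |b i * b n|)
          = ∑ i ∈ Finset.range n, |b i * b n| := by
        refine Finset.sum_congr rfl fun i hi => ?_
        rw [if_neg (Nat.ne_of_lt (Finset.mem_range.mp hi))]
      have h2 : (0:ℝ) ≤ ∑ j ∈ Finset.range n, (if n = j then 0 else |b n * b j|) := by
        apply Finset.sum_nonneg; intro j _; split <;> positivity
      simp only [hin]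
      rw [Finset.sum_add_distrib, h1, if_pos trivial]
      linarith [h2]
    -- main step
    rw [Finset.sum_range_succ, Finset.sum_range_succ, ← hS]
    have habs : |f (S + b n) - (∑ i ∈ Finset.range n, f (b i) + f (b n))|
        ≤ |S| * |b n| * |P| + |f S - ∑ i ∈ Finset.range n, f (b i)| := by
      have : f (S + b n) - (∑ i ∈ Finset.range n, f (b i) + f (b n))
          = S * b n * P + (f S - ∑ i ∈ Finset.range n, f (b i)) := by
        rw [hf0] at heq; linarith [heq]
      rw [this]
      calc |S * b n * P + (f S - ∑ i ∈ Finset.range n, f (b i))|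
          ≤ |S * b n * P| + |f S - ∑ i ∈ Finset.range n, f (b i)| := abs_add_le _ _
        _ = |S| * |b n| * |P| + |f S - ∑ i ∈ Finset.range n, f (b i)| := by
            rw [abs_mul, abs_mul]
    have h4 : |S| * |b n| * |P| ≤ M * ∑ i ∈ Finset.range n, |b i * b n| := by
      calc |S| * |b n| * |P| ≤ |S| * |b n| * M :=
            mul_le_mul_of_nonneg_left hb (by positivity)
        _ = M * (|S| * |b n|) := by ring
        _ ≤ M * ∑ i ∈ Finset.range n, |b i * b n| :=
            mul_le_mul_of_nonneg_left hcross hM0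
    calc |f (S + b n) - (∑ i ∈ Finset.range n, f (b i) + f (b n))|
        ≤ |S| * |b n| * |P| + |f S - ∑ i ∈ Finset.range n, f (b i)| := habs
      _ ≤ M * ∑ i ∈ Finset.range n, |b i * b n|
          + M * ∑ i ∈ Finset.range n, ∑ j ∈ Finset.range n, (if i = j then 0 else |b i * b j|) := by
            exact add_le_add h4 ihn
      _ ≤ M * ∑ i ∈ Finset.range (n+1), ∑ j ∈ Finset.range (n+1),
            (if i = j then 0 else |b i * b j|) := by nlinarith [hD]

/-- Claim A.3: if `f ∈ C²(ℝ)` and `f(0) = 0`, then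
`|f(Σᵢ aᵢ) − Σᵢ f(aᵢ)| ≤ (sup_{x∈I} |f''(x)|) Σ_{i≠j} |aᵢ aⱼ|`,
where `I = {Σᵢ θᵢ aᵢ : θ ∈ [0,1]^N}`. -/
theorem abs_f_sum_sub_sum_f_le
    (N : ℕ) (a : Fin N → ℝ) (f : ℝ → ℝ) (hf : ContDiff ℝ 2 f) (hf0 : f 0 = 0) :
    |f (∑ i : Fin N, a i) - ∑ i : Fin N, f (a i)|
      ≤ sSup ((fun x => |iteratedDeriv 2 f x|) ''
            ((fun θ : Fin N → ℝ => ∑ i : Fin N, θ i * a i) ''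
              Set.Icc (0 : Fin N → ℝ) 1))
        * ∑ i : Fin N, ∑ j ∈ Finset.univ.filter (fun j : Fin N => j ≠ i),
            |a i * a j| := by
  classical
  set J : Set ℝ := (fun θ : Fin N → ℝ => ∑ i : Fin N, θ i * a i) '' Set.Icc (0 : Fin N → ℝ) 1
    with hJ
  set M : ℝ := sSup ((fun x => |iteratedDeriv 2 f x|) '' J) with hMdef
  -- continuity of |f''|
  have hcont2 : Continuous fun x => |iteratedDeriv 2 f x| := by
    have : Continuous (iteratedDeriv 2 f) := by
      rw [iteratedDeriv_eq_iterate]; exact (hf.iterate_deriv' 0 2).continuous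
    exact this.abs
  have hJc : IsCompact J := by
    apply IsCompact.image isCompact_Icc
    exact continuous_finset_sum _ fun i _ => (continuous_apply i).mul continuous_const
  have hKc : IsCompact ((fun x => |iteratedDeriv 2 f x|) '' J) := hJc.image hcont2
  have hMle : ∀ x ∈ J, |iteratedDeriv 2 f x| ≤ M :=
    fun x hx => le_csSup hKc.bddAbove ⟨x, hx, rfl⟩
  have h0J : (0:ℝ) ∈ J := ⟨0, Set.left_mem_Icc.mpr zero_le_one, by simp⟩
  have hM0 : 0 ≤ M := le_trans (abs_nonneg _) (hMle 0 h0J)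
  set b : ℕ → ℝ := fun m => if h : m < N then a ⟨m, h⟩ else 0 with hb
  have hba : ∀ i : Fin N, b i.val = a i := fun i => by
    simp [hb, i.isLt]
  -- membership of the MVT points
  have hmem : ∀ n < N, ∀ s ∈ Set.Icc (0:ℝ) 1, ∀ c ∈ Set.Icc (0:ℝ) 1,
      s * (∑ i ∈ Finset.range n, b i) + c * b n ∈ J := by
    intro n hn s hs c hc
    refine ⟨fun i => if (i:ℕ) < n then s else if (i:ℕ) = n then c else 0, ?_, ?_⟩
    · rw [Set.mem_Icc]
      constructor <;> intro i <;> simp only [Pi.zero_apply, Pi.one_apply] <;> split_ifs <;>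
        first
          | exact hs.1 | exact hs.2 | exact hc.1 | exact hc.2 | norm_num
    · have h1 : ∑ i : Fin N, (if (i:ℕ) < n then s else if (i:ℕ) = n then c else 0) * a i
          = ∑ m ∈ Finset.range N, (if m < n then s else if m = n then c else 0) * b m := by
        rw [← Fin.sum_univ_eq_sum_range (fun m => (if m < n then s else if m = n then c else 0) * b m) N]
        exact Finset.sum_congr rfl fun i _ => by rw [hba]
      dsimp only
      rw [h1]
      have h2 : ∀ m, (if m < n then s else if m = n then c else 0) * b m
          = (if m < n then s * b m else 0) + (if m = n then c * b m else 0) := by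
        intro m
        rcases lt_trichotomy m n with h | h | h
        · rw [if_pos h, if_pos h, if_neg (by omega)]; ring
        · rw [if_neg (by omega), if_pos h, if_pos h, if_neg (by omega)]; ring
        · rw [if_neg (by omega), if_neg (by omega), if_neg (by omega), if_neg (by omega)]; ring
      simp only [h2]
      rw [Finset.sum_add_distrib]
      have h3 : ∑ m ∈ Finset.range N, (if m = n then c * b m else 0) = c * b n := by
        rw [Finset.sum_ite_eq' (Finset.range N) n (fun m => c * b m),
          if_pos (Finset.mem_range.mpr hn)]
      have h4 : ∑ m ∈ Finset.range N, (if m < n then s * b m else 0)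
          = s * ∑ i ∈ Finset.range n, b i := by
        rw [Finset.mul_sum]
        rw [← Finset.sum_subset (Finset.range_subset_range.mpr hn.le)
          (fun x _ hx => if_neg (by simpa using hx))]
        exact Finset.sum_congr rfl fun m hm => if_pos (Finset.mem_range.mp hm)
      rw [h3, h4]
  have hMbound : ∀ n < N, ∀ s ∈ Set.Icc (0:ℝ) 1, ∀ c ∈ Set.Icc (0:ℝ) 1,
      |iteratedDeriv 2 f (s * (∑ i ∈ Finset.range n, b i) + c * b n)| ≤ M :=
    fun n hn s hs c hc => hMle _ (hmem n hn s hs c hc)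
  have hmain := aux_ind f hf hf0 b M hM0 N hMbound N le_rfl
  -- convert sums
  have e1 : ∑ i : Fin N, a i = ∑ i ∈ Finset.range N, b i := by
    rw [← Fin.sum_univ_eq_sum_range b N]
    exact Finset.sum_congr rfl fun i _ => (hba i).symm
  have e2 : ∑ i : Fin N, f (a i) = ∑ i ∈ Finset.range N, f (b i) := by
    rw [← Fin.sum_univ_eq_sum_range (fun m => f (b m)) N]
    exact Finset.sum_congr rfl fun i _ => by rw [hba]
  have e3 : ∑ i : Fin N, ∑ j ∈ Finset.univ.filter (fun j : Fin N => j ≠ i), |a i * a j|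
      = ∑ i ∈ Finset.range N, ∑ j ∈ Finset.range N, (if i = j then 0 else |b i * b j|) := by
    rw [← Fin.sum_univ_eq_sum_range
      (fun m => ∑ j ∈ Finset.range N, (if m = j then 0 else |b m * b j|)) N]
    refine Finset.sum_congr rfl fun i _ => ?_
    rw [Finset.sum_filter,
      ← Fin.sum_univ_eq_sum_range (fun m => (if (i:ℕ) = m then 0 else |b i * b m|)) N]
    refine Finset.sum_congr rfl fun j _ => ?_
    rcases eq_or_ne j i with h | h
    · rw [if_neg (by simp [h]), if_pos (by simp [h])]
    · rw [if_pos h, if_neg (by simpa [Fin.ext_iff, eq_comm] using h), hba, hba]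
  rw [e1, e2, e3]
  exact hmain
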